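/- A2D Q-based gradient estimator (supplementary lemma, Eq. (19)): let I ⊆ ℝ be open, θ₀ ∈ I, and for each (a,s) ∈ A × S let θ ↦ π_θ(a|s) be a function on I such that π_θ(·|s) is a pmf on A for every θ ∈ I, π_{θ₀}(a|s) > 0, and θ ↦ π_θ(a|s) is differentiable at θ₀ with derivative π'(a|s). Fix Q : A × B → ℝ and define π̂_θ(a|b) = ∑_s d(s|b)·π_θ(a|s) for b with d(b) > 0, and J(θ) = ∑_{b : d(b)>0} d(b)·∑_a π̂_θ(a|b)·Q(a,b). Then J is differentiable at θ₀ with J′(θ₀) = ∑_{(s,b)∈S×B} d(s,b)·∑_a π_{θ₀}(a|s)·Q(a,b)·π'(a|s)/π_{θ₀}(a|s), i.e. the gradient of the implicit-policy objective equals the expectation under d(s,b) and π_{θ₀}(a|s) of Q(a,b) times the score (d/dθ) log π_θ(a|s) at θ₀. -/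

import Mathlib

open scoped BigOperators Classical

noncomputable section

/-- A probability mass function on a finite type. -/
def IsPmf {X : Type*} [Fintype X] (p : X → ℝ) : Prop :=
  (∀ x, 0 ≤ p x) ∧ ∑ x, p x = 1

/-- A2D Q-based gradient estimator: the gradient of the implicit-policy objective
`J(θ) = ∑_{b : d(b)>0} d(b)·∑_a π̂_θ(a|b)·Q(a,b)` equals the expectation under `d(s,b)`
and `π_{θ₀}(a|s)` of `Q(a,b)` times the score `(d/dθ) log π_θ(a|s)` at `θ₀`. -/
theorem a2d_q_based_gradient_estimator
    {S B A : Type*} [Fintype S] [Fintype B] [Fintype A]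
    [Nonempty S] [Nonempty B] [Nonempty A]
    (d : S × B → ℝ) (hd : IsPmf d)
    (dB : B → ℝ) (hdB : ∀ b, dB b = ∑ s, d (s, b))
    (I : Set ℝ) (hI : IsOpen I) (θ₀ : ℝ) (hθ₀ : θ₀ ∈ I)
    (π : ℝ → S → A → ℝ) (π' : S → A → ℝ)
    (hpmf : ∀ θ ∈ I, ∀ s, IsPmf (π θ s))
    (hpos : ∀ s a, 0 < π θ₀ s a)
    (hderiv : ∀ s a, HasDerivAt (fun θ => π θ s a) (π' s a) θ₀)
    (Q : A → B → ℝ)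
    (J : ℝ → ℝ)
    (hJ : ∀ θ, J θ = ∑ b : B, if 0 < dB b then
        dB b * ∑ a : A, (∑ s : S, d (s, b) / dB b * π θ s a) * Q a b else 0) :
    HasDerivAt J
      (∑ x : S × B, d x * ∑ a : A,
        π θ₀ x.1 a * Q a x.2 * (π' x.1 a / π θ₀ x.1 a)) θ₀ := by
  have hdnn := hd.1
  have hzero : ∀ b, ¬ 0 < dB b → ∀ s, d (s, b) = 0 := by
    intro b hb s
    have hb0 : dB b = 0 := le_antisymm (not_lt.mp hb) (by
      rw [hdB]; exact Finset.sum_nonneg fun s _ => hdnn _)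
    have := hdB b
    rw [hb0] at this
    have h := (Finset.sum_eq_zero_iff_of_nonneg (fun s _ => hdnn (s, b))).mp this.symm
    exact h s (Finset.mem_univ s)
  have key : HasDerivAt J
      (∑ b : B, if 0 < dB b then
        dB b * ∑ a : A, (∑ s : S, d (s, b) / dB b * π' s a) * Q a b else 0) θ₀ := by
    have hfun : J = fun θ => ∑ b : B, if 0 < dB b then
        dB b * ∑ a : A, (∑ s : S, d (s, b) / dB b * π θ s a) * Q a b else 0 := funext hJ
    rw [hfun]
    apply HasDerivAt.fun_sum
    intro b _
    by_cases hb : 0 < dB b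
    · simp only [if_pos hb]
      apply HasDerivAt.const_mul
      apply HasDerivAt.fun_sum
      intro a _
      apply HasDerivAt.mul_const
      apply HasDerivAt.fun_sum
      intro s _
      exact (hderiv s a).const_mul _
    · simp only [if_neg hb]
      exact hasDerivAt_const _ _
  convert key using 1
  rw [Fintype.sum_prod_type_right]
  apply Finset.sum_congr rfl
  intro b _
  by_cases hb : 0 < dB b
  · rw [if_pos hb]
    simp only [Finset.mul_sum, Finset.sum_mul]
    rw [Finset.sum_comm]
    apply Finset.sum_congr rfl
    intro a _
    apply Finset.sum_congr rfl
    intro s _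
    have h1 : π θ₀ s a ≠ 0 := (hpos s a).ne'
    have h2 : dB b ≠ 0 := hb.ne'
    field_simp
  · rw [if_neg hb]
    apply Finset.sum_eq_zero
    intro s _
    rw [hzero b hb s, zero_mul]
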